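/- Let σ be the logistic function, γ a real constant, and define the vector field F(θ₁,θ₂) = (γ·σ(θ₂)·σ'(θ₁), σ(θ₁)·σ'(θ₂)). F is a gradient of some C² function on ℝ² if and only if γ = 1. -/

import Mathlib

noncomputable def logistic (x : ℝ) : ℝ := 1 / (1 + Real.exp (-x))

noncomputable def logisticDeriv (x : ℝ) : ℝ := logistic x * (1 - logistic x)

lemma one_add_exp_pos (x : ℝ) : 0 < 1 + Real.exp (-x) := by positivity

lemma hasDerivAt_logistic (x : ℝ) : HasDerivAt logistic (logisticDeriv x) x := by
  have hu : HasDerivAt (fun x : ℝ => 1 + Real.exp (-x)) (-Real.exp (-x)) x := by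
    have h1 : HasDerivAt (fun x : ℝ => Real.exp (-x)) (Real.exp (-x) * (-1)) x :=
      (Real.hasDerivAt_exp (-x)).comp x (hasDerivAt_neg x)
    simpa using h1.const_add 1
  have hne : (1 + Real.exp (-x)) ≠ 0 := (one_add_exp_pos x).ne'
  have h := (hasDerivAt_const x (1 : ℝ)).div hu hne
  have heq : (0 * (1 + Real.exp (-x)) - 1 * -Real.exp (-x)) / (1 + Real.exp (-x)) ^ 2
      = logisticDeriv x := by
    unfold logisticDeriv logistic
    field_simp
    ring
  rw [heq] at h
  exact h

lemma contDiff_logistic : ContDiff ℝ 2 logistic := by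
  unfold logistic
  exact contDiff_const.div (contDiff_const.add (Real.contDiff_exp.comp contDiff_neg))
    (fun x => (one_add_exp_pos x).ne')

lemma logisticDeriv_zero_ne : logisticDeriv 0 ≠ 0 := by
  unfold logisticDeriv logistic
  norm_num [Real.exp_zero]

lemma logistic_one_ne_zero' : logistic 1 ≠ logistic 0 := by
  unfold logistic
  rw [neg_zero, Real.exp_zero]
  have h1 : Real.exp (-1) < 1 := Real.exp_lt_one_iff.mpr (by norm_num)
  have h2 : 0 < Real.exp (-1) := Real.exp_pos _
  intro h
  have hne : (1 + Real.exp (-1)) ≠ 0 := by positivity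
  field_simp at h
  linarith

/-- `F(θ₁,θ₂) = (γ·σ(θ₂)·σ'(θ₁), σ(θ₁)·σ'(θ₂))` is the gradient of some C²
function on ℝ² if and only if `γ = 1`. -/
theorem gradient_iff_gamma_eq_one (γ : ℝ) :
    (∃ J : ℝ → ℝ → ℝ, ContDiff ℝ 2 (Function.uncurry J) ∧
      (∀ θ₁ θ₂ : ℝ,
        deriv (fun x => J x θ₂) θ₁ = γ * logistic θ₂ * logisticDeriv θ₁ ∧
        deriv (fun y => J θ₁ y) θ₂ = logistic θ₁ * logisticDeriv θ₂)) ↔ γ = 1 := by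
  constructor
  · rintro ⟨J, hJ, h⟩
    -- differentiability of sections
    have hdiff : Differentiable ℝ (Function.uncurry J) :=
      hJ.differentiable (by norm_num)
    have hdx : ∀ y, Differentiable ℝ (fun x => J x y) := fun y =>
      hdiff.comp (differentiable_id.prodMk (differentiable_const y))
    have hdy : ∀ x, Differentiable ℝ (fun y => J x y) := fun x =>
      hdiff.comp ((differentiable_const x).prodMk differentiable_id)
    -- J x y - γ σ(y) σ(x) is constant in x
    have key : ∀ x y : ℝ, J x y = J 0 y + γ * logistic y * (logistic x - logistic 0) := by
      intro x y
      have hc : ∀ a b : ℝ,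
          (fun x => J x y - γ * logistic y * logistic x) a
            = (fun x => J x y - γ * logistic y * logistic x) b := by
        apply is_const_of_deriv_eq_zero
        · exact (hdx y).sub fun x =>
            ((hasDerivAt_logistic x).const_mul (γ * logistic y)).differentiableAt
        · intro a
          have h1 : HasDerivAt (fun x => γ * logistic y * logistic x)
              (γ * logistic y * logisticDeriv a) a :=
            (hasDerivAt_logistic a).const_mul _
          rw [deriv_fun_sub (hdx y a) h1.differentiableAt,
            (h a y).1, h1.deriv]
          ring
      have := hc x 0
      simp only at this
      linarith
    -- differentiate the identity in y
    have main : ∀ x y : ℝ, logistic x * logisticDeriv y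
        = logistic 0 * logisticDeriv y + γ * logisticDeriv y * (logistic x - logistic 0) := by
      intro x y
      have hfun : (fun y => J x y)
          = fun y => J 0 y + γ * logistic y * (logistic x - logistic 0) :=
        funext fun y => key x y
      have hJ0 : HasDerivAt (fun y => J 0 y) (logistic 0 * logisticDeriv y) y := by
        have := (hdy 0 y).hasDerivAt
        rwa [(h 0 y).2] at this
      have hR : HasDerivAt (fun y => J 0 y + γ * logistic y * (logistic x - logistic 0))
          (logistic 0 * logisticDeriv y + γ * logisticDeriv y * (logistic x - logistic 0)) y := by
        have := hJ0.add (((hasDerivAt_logistic y).const_mul γ).mul_const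
          (logistic x - logistic 0))
        exact this
      calc logistic x * logisticDeriv y = deriv (fun y => J x y) y := ((h x y).2).symm
        _ = _ := by rw [hfun, hR.deriv]
    have E := main 1 0
    have hprod : (γ - 1) * ((logistic 1 - logistic 0) * logisticDeriv 0) = 0 := by
      linear_combination -E
    rcases mul_eq_zero.mp hprod with h1 | h2
    · linarith
    · exact absurd h2 (mul_ne_zero (sub_ne_zero.2 logistic_one_ne_zero') logisticDeriv_zero_ne)
  · rintro rfl
    refine ⟨fun x y => logistic x * logistic y, ?_, ?_⟩
    · have : Function.uncurry (fun x y => logistic x * logistic y)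
          = fun p : ℝ × ℝ => logistic p.1 * logistic p.2 := rfl
      rw [this]
      exact (contDiff_logistic.comp contDiff_fst).mul (contDiff_logistic.comp contDiff_snd)
    · intro a b
      constructor
      · rw [((hasDerivAt_logistic a).mul_const (logistic b)).deriv]; ring
      · rw [((hasDerivAt_logistic b).const_mul (logistic a)).deriv]
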